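/- Let A = (Σ, Q, δ) be a weakly acyclic automaton, let S, T ⊆ Q, and let R be the set of all sink states of A that are reachable from some state of S. Assume R ⊆ S. Then there exists a word w ∈ Σ* with δ(S, w) ⊆ T if and only if R ⊆ T. -/

import Mathlib

/-- The transition function extended to words: `δ*(q, u)`. -/
def deltaStar {Q A : Type*} (δ : Q → A → Q) (q : Q) (u : List A) : Q :=
  u.foldl δ q

/-- A complete deterministic semi-automaton is weakly acyclic if all simple
cycles are self-loops. -/
def WeaklyAcyclic {Q A : Type*} (δ : Q → A → Q) : Prop :=
  ∀ (q : Q) (u : List A), u ≠ [] → deltaStar δ q u = q → ∀ x ∈ u, δ q x = q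

lemma deltaStar_append {Q A : Type*} (δ : Q → A → Q) (q : Q) (u v : List A) :
    deltaStar δ q (u ++ v) = deltaStar δ (deltaStar δ q u) v :=
  List.foldl_append

lemma sink_fixed {Q A : Type*} (δ : Q → A → Q) {q : Q} (h : ∀ x, δ q x = q)
    (u : List A) : deltaStar δ q u = q := by
  induction u with
  | nil => rfl
  | cons x u ih =>
    show deltaStar δ (δ q x) u = q
    rw [h x]; exact ih

lemma reach_sink_aux {Q A : Type*} [Fintype Q] (δ : Q → A → Q)
    (hwa : WeaklyAcyclic δ) :
    ∀ n (p : Q), ({q | ∃ u : List A, deltaStar δ p u = q}).ncard ≤ n →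
    ∃ u : List A, ∀ x, δ (deltaStar δ p u) x = deltaStar δ p u := by
  intro n
  induction n with
  | zero =>
    intro p hp
    exfalso
    have hmem : p ∈ {q | ∃ u : List A, deltaStar δ p u = q} := ⟨[], rfl⟩
    have : 0 < ({q | ∃ u : List A, deltaStar δ p u = q}).ncard := (Set.ncard_pos (Set.toFinite _)).2 ⟨p, hmem⟩
    omega
  | succ n ih =>
    intro p hp
    by_cases h : ∀ x, δ p x = p
    · exact ⟨[], h⟩
    · push_neg at h
      obtain ⟨x, hx⟩ := h
      have hsub : {q | ∃ u : List A, deltaStar δ (δ p x) u = q} ⊂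
          {q | ∃ u : List A, deltaStar δ p u = q} := by
        constructor
        · rintro q ⟨u, rfl⟩
          exact ⟨x :: u, rfl⟩
        · intro hcon
          have hpmem : p ∈ {q | ∃ u : List A, deltaStar δ (δ p x) u = q} :=
            hcon ⟨[], rfl⟩
          obtain ⟨u, hu⟩ := hpmem
          have : deltaStar δ p (x :: u) = p := hu
          have := hwa p (x :: u) (by simp) this x (by simp)
          exact hx this
      have hlt := Set.ncard_lt_ncard hsub (Set.toFinite _)
      obtain ⟨u, hu⟩ := ih (δ p x) (by omega)
      exact ⟨x :: u, hu⟩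

lemma reach_sink {Q A : Type*} [Fintype Q] (δ : Q → A → Q)
    (hwa : WeaklyAcyclic δ) (p : Q) :
    ∃ u : List A, ∀ x, δ (deltaStar δ p u) x = deltaStar δ p u :=
  reach_sink_aux δ hwa _ p le_rfl

lemma all_sink {Q A : Type*} [Fintype Q] (δ : Q → A → Q)
    (hwa : WeaklyAcyclic δ) (L : List Q) :
    ∃ w : List A, ∀ p ∈ L, ∀ x, δ (deltaStar δ p w) x = deltaStar δ p w := by
  induction L with
  | nil => exact ⟨[], by simp⟩
  | cons p L ih =>
    obtain ⟨w, hw⟩ := ih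
    obtain ⟨u, hu⟩ := reach_sink δ hwa (deltaStar δ p w)
    refine ⟨w ++ u, ?_⟩
    intro q hq x
    rcases List.mem_cons.1 hq with rfl | hq
    · rw [deltaStar_append]; exact hu x
    · rw [deltaStar_append, sink_fixed δ (hw q hq)]
      exact hw q hq x

/-- Let `R` be the set of sink states reachable from some state of `S`, and
assume `R ⊆ S`. Then some word maps `S` into `T` iff `R ⊆ T`. -/
theorem map_into_subset_iff {Q A : Type*} [Fintype Q] [Nonempty Q] [Fintype A]
    (δ : Q → A → Q) (hwa : WeaklyAcyclic δ) (S T : Set Q) (R : Set Q)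
    (hR : R = {q : Q | (∀ x : A, δ q x = q) ∧
                       ∃ p ∈ S, ∃ u : List A, deltaStar δ p u = q})
    (hRS : R ⊆ S) :
    (∃ w : List A, (fun q => deltaStar δ q w) '' S ⊆ T) ↔ R ⊆ T := by
  constructor
  · rintro ⟨w, hw⟩ r hr
    have hsink : ∀ x, δ r x = r := (hR ▸ hr).1
    have : deltaStar δ r w = r := sink_fixed δ hsink w
    have := hw ⟨r, hRS hr, this⟩
    exact this
  · intro hRT
    obtain ⟨w, hw⟩ := all_sink δ hwa (Finset.univ.toList : List Q)
    refine ⟨w, ?_⟩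
    rintro _ ⟨p, hp, rfl⟩
    apply hRT
    rw [hR]
    exact ⟨hw p (by simp), p, hp, w, rfl⟩
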